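/- Threshold condition for price impact, Case 1 (price decreases): Let (L, a, b) be a liquidity position with L > 0 and 0 < a < b, let p_x, p_y > 0 be the market prices of tokens X and Y, and let q, q' > 0 be pool prices with q' < q. Write q̂ = min(b, max(a, q)) and q̂' = min(b, max(a, q')), and assume q̂' < q̂. Then the absolute price impact C = p_x·(x(q) − x(q')) + p_y·(y(q) − y(q')) satisfies C ≤ 0 if and only if (1/q̂)·(p_x/p_y)² ≥ q̂'. -/

import Mathlib

/-- Token-X amount held by a CLMM position `(L, a, b)` at pool price `q`. -/
noncomputable def clmmX (L a b q : ℝ) : ℝ :=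
  L * (1 / Real.sqrt (min b (max a q)) - 1 / Real.sqrt b)

/-- Token-Y amount held by a CLMM position `(L, a, b)` at pool price `q`. -/
noncomputable def clmmY (L a b q : ℝ) : ℝ :=
  L * (Real.sqrt (min b (max a q)) - Real.sqrt a)

/-- Threshold condition for price impact, Case 1 (price decreases). -/
theorem threshold_condition_price_decrease
    (L a b px py q q' : ℝ)
    (hL : 0 < L) (ha : 0 < a) (hab : a < b)
    (hpx : 0 < px) (hpy : 0 < py)
    (hq : 0 < q) (hq' : 0 < q') (hlt : q' < q)
    (hproj : min b (max a q') < min b (max a q)) :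
    px * (clmmX L a b q - clmmX L a b q') + py * (clmmY L a b q - clmmY L a b q') ≤ 0 ↔
      (1 / min b (max a q)) * (px / py) ^ 2 ≥ min b (max a q') := by
  set A := min b (max a q) with hAdef
  set B := min b (max a q') with hBdef
  have hb : (0:ℝ) < b := ha.trans hab
  have haB : a ≤ B := le_min hab.le (le_max_left _ _)
  have hB0 : 0 < B := ha.trans_le haB
  have hA0 : 0 < A := hB0.trans hproj
  set u := Real.sqrt A with hudef
  set v := Real.sqrt B with hvdef
  set sb := Real.sqrt b with hsbdef
  have hu : 0 < u := Real.sqrt_pos.mpr hA0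
  have hv : 0 < v := Real.sqrt_pos.mpr hB0
  have hsb : 0 < sb := Real.sqrt_pos.mpr hb
  have hvu : v < u := Real.sqrt_lt_sqrt hB0.le hproj
  have hu2 : u ^ 2 = A := Real.sq_sqrt hA0.le
  have hv2 : v ^ 2 = B := Real.sq_sqrt hB0.le
  have hC : px * (clmmX L a b q - clmmX L a b q') + py * (clmmY L a b q - clmmY L a b q')
      = L * (u - v) * (py - px / (u * v)) := by
    unfold clmmX clmmY
    rw [← hAdef, ← hBdef, ← hudef, ← hvdef, ← hsbdef]
    field_simp
    ring
  rw [hC]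
  have hLuv : 0 < L * (u - v) := by nlinarith
  constructor
  · intro h
    have h1 : py - px / (u * v) ≤ 0 := by
      by_contra hcon
      push_neg at hcon
      nlinarith [mul_pos hLuv hcon]
    have h2 : py * (u * v) ≤ px := by
      rw [sub_nonpos, le_div_iff₀ (by positivity)] at h1
      exact h1
    have e : B * (py ^ 2 * A) = (py * (u * v)) ^ 2 := by rw [← hu2, ← hv2]; ring
    rw [ge_iff_le, show (1 / A) * (px / py) ^ 2 = px ^ 2 / (py ^ 2 * A) by
      field_simp, le_div_iff₀ (by positivity), e]
    nlinarith [mul_le_mul h2 h2 (by positivity) hpx.le]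
  · intro h
    rw [ge_iff_le, show (1 / A) * (px / py) ^ 2 = px ^ 2 / (py ^ 2 * A) by
      field_simp, le_div_iff₀ (by positivity)] at h
    have e : B * (py ^ 2 * A) = (py * (u * v)) ^ 2 := by rw [← hu2, ← hv2]; ring
    rw [e] at h
    have h2 : py * (u * v) ≤ px := by
      have := (pow_le_pow_iff_left₀ (by positivity) hpx.le two_ne_zero).mp h
      exact this
    have h1 : py - px / (u * v) ≤ 0 := by
      rw [sub_nonpos, le_div_iff₀ (by positivity)]
      exact h2
    exact mul_nonpos_of_nonneg_of_nonpos hLuv.le h1
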